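/- For every n, q ∈ ℤ⁺, every arena A with n nodes, every total preorder ≼ on its node set V, and every q-state strategy S₁ of Player 0, there exists a chromatic (qn+1)^n-state strategy S₂ of Player 0 such that for every v ∈ V: col(S₂, v) ⊆ ⋃_{u ∈ V, v ≼ u} col(S₁, u). -/

import Mathlib

/-- An arena over a set of colors `C`. -/
structure Arena (C : Type) where
  V : Type
  E : Type
  finV : Fintype V
  finE : Fintype E
  /-- `isP0 v` means node `v` is controlled by Player 0. -/
  isP0 : V → Prop
  source : E → V
  target : E → V
  col : E → C
  out : ∀ v : V, ∃ e : E, source e = v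

namespace Arena

variable {C : Type} (A : Arena C)

/-- `PathFrom v es w` : the edge list `es` forms a finite path from `v` to `w`. -/
def PathFrom : A.V → List A.E → A.V → Prop
  | v, [], w => v = w
  | v, e :: es, w => A.source e = v ∧ PathFrom (A.target e) es w

/-- The endpoint of the edge list `es` started at `v`. -/
def ptarget (v : A.V) (es : List A.E) : A.V := es.foldl (fun _ e => A.target e) v

/-- A strategy of Player 0: given the starting node and the finite play so far,
it outputs the next edge. -/
def Strategy (A : Arena C) : Type := A.V → List A.E → A.E

/-- A legal strategy moves along an edge leaving the current node. -/
def IsStrategy (S : A.Strategy) : Prop :=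
  ∀ v es, A.source (S v es) = A.ptarget v es

/-- The finite edge list `es`, viewed as a play from `v`, is consistent with `S`:
at every prefix ending in a Player-0 node, the next edge is the one chosen by `S`. -/
def ConsFrom (S : A.Strategy) (v : A.V) (es : List A.E) : Prop :=
  ∀ p e r, es = p ++ e :: r → A.isP0 (A.ptarget v p) → e = S v p

/-- `P` is an infinite path starting at `v`. -/
def InfPlay (v : A.V) (P : ℕ → A.E) : Prop :=
  A.source (P 0) = v ∧ ∀ i, A.target (P i) = A.source (P (i + 1))

/-- The length-`k` prefix of an infinite play, as a list. -/
def prefixList (P : ℕ → A.E) (k : ℕ) : List A.E := List.ofFn (fun i : Fin k => P i)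

/-- `colSet S v` is the set of color sequences of infinite plays from `v` consistent with `S`. -/
def colSet (S : A.Strategy) (v : A.V) : Set (ℕ → C) :=
  { γ | ∃ P : ℕ → A.E, A.InfPlay v P ∧ (∀ k, A.ConsFrom S v (A.prefixList P k)) ∧
      γ = fun i => A.col (P i) }

/-- `colSetU S U = ⋃ v ∈ U, colSet S v`. -/
def colSetU (S : A.Strategy) (U : Set A.V) : Set (ℕ → C) := ⋃ v ∈ U, A.colSet S v

/-- State of a memory structure after reading a list of edges. -/
def mstate {M : Type} (δ : M → A.E → M) (m0 : M) (es : List A.E) : M := es.foldl δ m0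

/-- `S` is implemented by the memory structure `(M, m0, δ)`: its moves depend only
on the current node and the current memory state. -/
def HasMemory (S : A.Strategy) (M : Type) (m0 : M) (δ : M → A.E → M) : Prop :=
  ∀ v1 es1 v2 es2, A.ptarget v1 es1 = A.ptarget v2 es2 →
    A.mstate δ m0 es1 = A.mstate δ m0 es2 → S v1 es1 = S v2 es2

/-- A memory structure is chromatic if transitions depend only on colors of edges. -/
def ChromaticMem (M : Type) (δ : M → A.E → M) : Prop :=
  ∃ σ : M → C → M, ∀ m e, δ m e = σ m (A.col e)

/-- `S` is a `q`-state strategy. -/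
def IsQState (S : A.Strategy) (q : ℕ) : Prop :=
  ∃ (M : Type) (_ : Fintype M) (m0 : M) (δ : M → A.E → M),
    Fintype.card M = q ∧ A.HasMemory S M m0 δ

/-- `S` is a chromatic `q`-state strategy. -/
def IsChromaticQState (S : A.Strategy) (q : ℕ) : Prop :=
  ∃ (M : Type) (_ : Fintype M) (m0 : M) (δ : M → A.E → M),
    Fintype.card M = q ∧ A.ChromaticMem M δ ∧ A.HasMemory S M m0 δ

end Arena

attribute [instance] Arena.finV Arena.finE

open Arena

section Aux

open Classical

variable {C : Type} {A : Arena C}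

namespace Arena

@[simp] lemma ptarget_nil (v : A.V) : A.ptarget v ([] : List A.E) = v := rfl

lemma ptarget_append_single (v : A.V) (es : List A.E) (e : A.E) :
    A.ptarget v (es ++ [e]) = A.target e := by
  simp [ptarget, List.foldl_append]

lemma mstate_append_single {M : Type} (δ : M → A.E → M) (m0 : M) (es : List A.E) (e : A.E) :
    A.mstate δ m0 (es ++ [e]) = δ (A.mstate δ m0 es) e := by
  simp [mstate, List.foldl_append]

lemma pathFrom_ptarget {v w : A.V} {p : List A.E} (h : A.PathFrom v p w) :
    A.ptarget v p = w := by
  induction p generalizing v with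
  | nil => exact h
  | cons e es ih =>
    obtain ⟨h1, h2⟩ := h
    simpa [ptarget] using ih h2

lemma pathFrom_append_single {v w : A.V} {p : List A.E} {e : A.E}
    (h : A.PathFrom v p w) (hs : A.source e = w) :
    A.PathFrom v (p ++ [e]) (A.target e) := by
  induction p generalizing v with
  | nil => exact ⟨h ▸ hs, rfl⟩
  | cons f fs ih => exact ⟨h.1, ih h.2⟩

lemma pathFrom_prefix {v w : A.V} {p r : List A.E} (h : A.PathFrom v (p ++ r) w) :
    A.PathFrom v p (A.ptarget v p) := by
  induction p generalizing v with
  | nil => rfl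
  | cons f fs ih =>
    refine ⟨h.1, ?_⟩
    simpa [ptarget] using ih h.2

lemma pathFrom_chain {v w : A.V} {p : List A.E} (h : A.PathFrom v p w) :
    ∀ i (hi : i + 1 < p.length), A.target (p[i]'(by omega)) = A.source (p[i+1]'hi) := by
  induction p generalizing v with
  | nil => intro i hi; simp at hi
  | cons f fs ih =>
    intro i hi
    match i with
    | 0 =>
      match fs, h.2 with
      | g :: gs, h2 => exact h2.1.symm
    | Nat.succ j =>
      exact ih h.2 j (by simpa using hi)

lemma consFrom_nil (S : A.Strategy) (v : A.V) : A.ConsFrom S v [] := by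
  intro p e r h
  simp at h

lemma consFrom_prefix {S : A.Strategy} {v : A.V} {p r : List A.E}
    (h : A.ConsFrom S v (p ++ r)) : A.ConsFrom S v p := by
  intro a e b hd hp
  exact h a e (b ++ r) (by rw [hd]; simp) hp

lemma consFrom_append_single {S : A.Strategy} {v : A.V} {p : List A.E} {e : A.E}
    (h : A.ConsFrom S v p) (he : A.isP0 (A.ptarget v p) → e = S v p) :
    A.ConsFrom S v (p ++ [e]) := by
  intro a e' b hd hp
  rcases b.eq_nil_or_concat with rfl | ⟨b', x, rfl⟩
  · obtain ⟨h1, h2⟩ := List.append_inj' hd rfl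
    obtain rfl := h1
    obtain rfl : e = e' := by simpa using h2
    exact he hp
  · have hd' : p ++ [e] = (a ++ e' :: b') ++ [x] := by simp [hd]
    obtain ⟨h1, h2⟩ := List.append_inj' hd' rfl
    exact h a e' b' h1 hp

lemma prefixList_succ (P : ℕ → A.E) (k : ℕ) :
    A.prefixList P (k + 1) = A.prefixList P k ++ [P k] := by
  rw [prefixList, List.ofFn_succ']
  simp [prefixList, List.concat_eq_append, Fin.last]

@[simp] lemma prefixList_zero (P : ℕ → A.E) : A.prefixList P 0 = [] := rfl

@[simp] lemma prefixList_length (P : ℕ → A.E) (k : ℕ) : (A.prefixList P k).length = k := by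
  simp [prefixList]

end Arena

end Aux

section Construction

open Classical

lemma exists_pre_max {α : Type*} (pre : α → α → Prop)
    (hrefl : ∀ a, pre a a) (htrans : ∀ a b c, pre a b → pre b c → pre a c)
    (htotal : ∀ a b, pre a b ∨ pre b a)
    (s : Finset α) (hs : s.Nonempty) : ∃ a ∈ s, ∀ b ∈ s, pre b a := by
  induction hs using Finset.Nonempty.cons_induction with
  | singleton a => exact ⟨a, by simp, by simp [hrefl]⟩
  | cons a s ha hs ih =>
    obtain ⟨m, hm, hmax⟩ := ih
    rcases htotal a m with h | h
    · refine ⟨m, Finset.mem_cons_of_mem hm, ?_⟩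
      intro b hb
      rcases Finset.mem_cons.1 hb with rfl | hb
      · exact h
      · exact hmax b hb
    · refine ⟨a, Finset.mem_cons_self a _, ?_⟩
      intro b hb
      rcases Finset.mem_cons.1 hb with rfl | hb
      · exact hrefl b
      · exact htrans b m a (hmax b hb) h

lemma exists_chain {α : Type*} (P : α → Prop) (R : α → α → Prop) (a0 : α) (h0 : P a0)
    (hstep : ∀ a, P a → ∃ b, R a b ∧ P b) :
    ∃ f : ℕ → α, f 0 = a0 ∧ (∀ k, P (f k)) ∧ ∀ k, R (f k) (f (k+1)) := by
  choose g hg1 hg2 using hstep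
  let f : ℕ → {a // P a} := fun k => Nat.rec ⟨a0, h0⟩ (fun _ p => ⟨g p.1 p.2, hg2 _ _⟩) k
  exact ⟨fun k => (f k).1, rfl, fun k => (f k).2, fun k => hg1 _ _⟩

variable {C : Type} (A : Arena C) (S₁ : A.Strategy) {M : Type} (m0 : M) (δ : M → A.E → M)
  (pre : A.V → A.V → Prop)

/-- canonical move of `S₁` at node `w` with memory `m`. -/
noncomputable def sig1 (w : A.V) (m : M) : A.E :=
  if h : ∃ p : A.V × List A.E, A.ptarget p.1 p.2 = w ∧ A.mstate δ m0 p.2 = m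
  then S₁ h.choose.1 h.choose.2
  else (A.out w).choose

lemma sig1_source (hS₁ : A.IsStrategy S₁) (w : A.V) (m : M) :
    A.source (sig1 A S₁ m0 δ w m) = w := by
  unfold sig1
  split
  · next h => rw [hS₁]; exact h.choose_spec.1
  · exact (A.out w).choose_spec

lemma sig1_spec (hmem : A.HasMemory S₁ M m0 δ) (v : A.V) (es : List A.E) (w : A.V) (m : M)
    (h1 : A.ptarget v es = w) (h2 : A.mstate δ m0 es = m) :
    S₁ v es = sig1 A S₁ m0 δ w m := by
  have hex : ∃ p : A.V × List A.E, A.ptarget p.1 p.2 = w ∧ A.mstate δ m0 p.2 = m :=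
    ⟨(v, es), h1, h2⟩
  rw [sig1, dif_pos hex]
  exact hmem v es _ _ (h1.trans hex.choose_spec.1.symm) (h2.trans hex.choose_spec.2.symm)

/-- candidate components for the chromatic update. -/
def cands (f : A.V → Option (A.V × M)) (c : C) (v'' : A.V) : Set (A.V × M) :=
  {um | ∃ w m e, f w = some (um.1, m) ∧ A.source e = w ∧ A.target e = v'' ∧ A.col e = c ∧
    (A.isP0 w → e = sig1 A S₁ m0 δ w m) ∧ um.2 = δ m e}

/-- chromatic memory update. -/
noncomputable def sigma2 (f : A.V → Option (A.V × M)) (c : C) : A.V → Option (A.V × M) :=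
  fun v'' =>
    if h : ∃ p ∈ cands A S₁ m0 δ f c v'', ∀ q ∈ cands A S₁ m0 δ f c v'', pre q.1 p.1
    then some h.choose else none

def f0 : A.V → Option (A.V × M) := fun u => some (u, m0)

noncomputable def delta2 : (A.V → Option (A.V × M)) → A.E → (A.V → Option (A.V × M)) :=
  fun f e => sigma2 A S₁ m0 δ pre f (A.col e)

noncomputable def Strat2 : A.Strategy := fun v es =>
  match (A.mstate (delta2 A S₁ m0 δ pre) (f0 A m0) es) (A.ptarget v es) with
  | some (u, m) => sig1 A S₁ m0 δ (A.ptarget v es) m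
  | none => (A.out (A.ptarget v es)).choose

variable [Fintype A.V] [Fintype M]

lemma sigma2_spec
    (hrefl : ∀ v, pre v v) (htrans : ∀ u v w, pre u v → pre v w → pre u w)
    (htotal : ∀ u v, pre u v ∨ pre v u)
    (f : A.V → Option (A.V × M)) (c : C) (v'' : A.V) {um : A.V × M}
    (hmem : um ∈ cands A S₁ m0 δ f c v'') :
    ∃ p, sigma2 A S₁ m0 δ pre f c v'' = some p ∧ p ∈ cands A S₁ m0 δ f c v'' ∧ pre um.1 p.1 := by
  have hfin : (cands A S₁ m0 δ f c v'').Finite := Set.toFinite _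
  obtain ⟨p, hp, hpmax⟩ := exists_pre_max (fun a b : A.V × M => pre a.1 b.1)
    (fun a => hrefl a.1) (fun a b c h1 h2 => htrans _ _ _ h1 h2)
    (fun a b => htotal a.1 b.1) hfin.toFinset ⟨um, hfin.mem_toFinset.2 hmem⟩
  have hp' : p ∈ cands A S₁ m0 δ f c v'' := hfin.mem_toFinset.1 hp
  have hex : ∃ p ∈ cands A S₁ m0 δ f c v'', ∀ q ∈ cands A S₁ m0 δ f c v'', pre q.1 p.1 :=
    ⟨p, hp', fun q hq => hpmax q (hfin.mem_toFinset.2 hq)⟩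
  refine ⟨hex.choose, by rw [sigma2, dif_pos hex], hex.choose_spec.1, ?_⟩
  exact hex.choose_spec.2 um hmem

lemma sigma2_cases (f : A.V → Option (A.V × M)) (c : C) (v'' : A.V) {um : A.V × M}
    (h : sigma2 A S₁ m0 δ pre f c v'' = some um) : um ∈ cands A S₁ m0 δ f c v'' := by
  rw [sigma2] at h
  split at h
  · next hex => obtain rfl : hex.choose = um := by injection h
                exact hex.choose_spec.1
  · exact absurd h (by simp)

end Construction

section Main

open Classical

variable {C : Type} (A : Arena C) (S₁ : A.Strategy) {M : Type} (m0 : M) (δ : M → A.E → M)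
  (pre : A.V → A.V → Prop)

lemma strat2_isStrategy (hS₁ : A.IsStrategy S₁) :
    A.IsStrategy (Strat2 A S₁ m0 δ pre) := by
  intro v es
  cases hm : (A.mstate (delta2 A S₁ m0 δ pre) (f0 A m0) es) (A.ptarget v es) with
  | none => simpa [Strat2, hm] using (A.out _).choose_spec
  | some p => simp [Strat2, hm, sig1_source A S₁ m0 δ hS₁]

lemma strat2_hasMemory :
    A.HasMemory (Strat2 A S₁ m0 δ pre) (A.V → Option (A.V × M)) (f0 A m0)
      (delta2 A S₁ m0 δ pre) := by
  intro v1 es1 v2 es2 h1 h2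
  simp only [Strat2, h1, h2]

lemma strat2_eq_of_some (v : A.V) (es : List A.E) (u : A.V) (m : M)
    (h : (A.mstate (delta2 A S₁ m0 δ pre) (f0 A m0) es) (A.ptarget v es) = some (u, m)) :
    Strat2 A S₁ m0 δ pre v es = sig1 A S₁ m0 δ (A.ptarget v es) m := by
  simp only [Strat2, h]

lemma infPlay_source {v : A.V} {P : ℕ → A.E} (hP : A.InfPlay v P) (k : ℕ) :
    A.source (P k) = A.ptarget v (A.prefixList P k) := by
  induction k with
  | zero => simpa using hP.1
  | succ k ih =>
    rw [Arena.prefixList_succ, Arena.ptarget_append_single]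
    exact (hP.2 k).symm

variable [Fintype M]

lemma invariant (hS₁ : A.IsStrategy S₁) (hmem : A.HasMemory S₁ M m0 δ)
    (hrefl : ∀ v, pre v v) (htrans : ∀ u v w, pre u v → pre v w → pre u w)
    (htotal : ∀ u v, pre u v ∨ pre v u)
    (v : A.V) (P : ℕ → A.E) (hP : A.InfPlay v P)
    (hcons : ∀ k, A.ConsFrom (Strat2 A S₁ m0 δ pre) v (A.prefixList P k)) (k : ℕ) :
    (∀ w u m,
      (A.mstate (delta2 A S₁ m0 δ pre) (f0 A m0) (A.prefixList P k)) w = some (u, m) →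
      ∃ p, A.PathFrom u p w ∧ A.ConsFrom S₁ u p ∧ A.mstate δ m0 p = m ∧
        p.map A.col = (A.prefixList P k).map A.col)
    ∧ ∃ u m,
      (A.mstate (delta2 A S₁ m0 δ pre) (f0 A m0) (A.prefixList P k))
          (A.ptarget v (A.prefixList P k)) = some (u, m) ∧ pre v u := by
  induction k with
  | zero =>
    constructor
    · intro w u m h
      obtain ⟨rfl, rfl⟩ : w = u ∧ m0 = m := by
        have : some (w, m0) = some (u, m) := h
        simpa [Prod.ext_iff] using this
      exact ⟨[], rfl, Arena.consFrom_nil S₁ w, rfl, rfl⟩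
    · exact ⟨v, m0, rfl, hrefl v⟩
  | succ k ih =>
    obtain ⟨IH1, IH2⟩ := ih
    have hpre : A.prefixList P (k + 1) = A.prefixList P k ++ [P k] := Arena.prefixList_succ P k
    have hstep : A.mstate (delta2 A S₁ m0 δ pre) (f0 A m0) (A.prefixList P (k + 1)) =
        sigma2 A S₁ m0 δ pre
          (A.mstate (delta2 A S₁ m0 δ pre) (f0 A m0) (A.prefixList P k)) (A.col (P k)) := by
      rw [hpre, Arena.mstate_append_single]; rfl
    constructor
    · intro w'' u' m' h
      rw [hstep] at h
      obtain ⟨w, m, e', hfw, hse, hte, hce, hp0, hm'⟩ := sigma2_cases A S₁ m0 δ pre _ _ _ h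
      obtain ⟨p, hp1, hp2, hp3, hp4⟩ := IH1 w u' m hfw
      refine ⟨p ++ [e'], ?_, ?_, ?_, ?_⟩
      · rw [← hte]; exact Arena.pathFrom_append_single hp1 hse
      · refine Arena.consFrom_append_single hp2 ?_
        rw [Arena.pathFrom_ptarget hp1]
        intro hw
        rw [hp0 hw]
        exact (sig1_spec A S₁ m0 δ hmem u' p w m (Arena.pathFrom_ptarget hp1) hp3).symm
      · rw [Arena.mstate_append_single, hp3]; exact hm'.symm
      · rw [hpre]; simp [hp4, hce]
    · obtain ⟨u, m, hfv, hpv⟩ := IH2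
      have hsrc : A.source (P k) = A.ptarget v (A.prefixList P k) := infPlay_source A hP k
      have hcand : (u, δ m (P k)) ∈ cands A S₁ m0 δ
          (A.mstate (delta2 A S₁ m0 δ pre) (f0 A m0) (A.prefixList P k))
          (A.col (P k)) (A.target (P k)) := by
        refine ⟨A.ptarget v (A.prefixList P k), m, P k, hfv, hsrc, rfl, rfl, ?_, rfl⟩
        intro hw
        have h1 : P k = Strat2 A S₁ m0 δ pre v (A.prefixList P k) :=
          hcons (k + 1) (A.prefixList P k) (P k) [] (by rw [hpre]) hw
        rw [h1]
        exact strat2_eq_of_some A S₁ m0 δ pre v _ u m hfv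
      obtain ⟨pmax, hps, _, hpm⟩ := sigma2_spec A S₁ m0 δ pre hrefl htrans htotal _ _ _ hcand
      refine ⟨pmax.1, pmax.2, ?_, htrans _ _ _ hpv hpm⟩
      have hpt : A.ptarget v (A.prefixList P (k + 1)) = A.target (P k) := by
        rw [hpre, Arena.ptarget_append_single]
      rw [hstep, hpt]
      simpa using hps

end Main

section Koenig

open Classical

variable {C : Type} (A : Arena C) (S₁ : A.Strategy)

/-- `p` is a finite play from `u` consistent with `S₁` whose colors agree with `γ`. -/
def GoodL (u : A.V) (γ : ℕ → C) (p : List A.E) : Prop :=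
  A.PathFrom u p (A.ptarget u p) ∧ A.ConsFrom S₁ u p ∧
    ∀ i (h : i < p.length), A.col (p[i]'h) = γ i

lemma goodL_take {u : A.V} {γ : ℕ → C} {p : List A.E} (h : GoodL A S₁ u γ p) (j : ℕ) :
    GoodL A S₁ u γ (p.take j) := by
  obtain ⟨h1, h2, h3⟩ := h
  have hsplit : p.take j ++ p.drop j = p := List.take_append_drop j p
  refine ⟨?_, ?_, ?_⟩
  · exact A.pathFrom_prefix (hsplit ▸ h1)
  · exact A.consFrom_prefix (hsplit ▸ h2)
  · intro i hi
    have hi' : i < p.length := lt_of_lt_of_le hi (by simpa using List.length_take_le j p)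
    rw [List.getElem_take]
    exact h3 i hi'

lemma exists_infinite_play {u : A.V} {γ : ℕ → C}
    (hall : ∀ k, ∃ p, GoodL A S₁ u γ p ∧ p.length = k) :
    γ ∈ A.colSet S₁ u := by
  set Ext : List A.E → Prop := fun p => ∀ k, ∃ r, r.length = k ∧ GoodL A S₁ u γ (p ++ r)
    with hExt
  have hgood_of_ext : ∀ p, Ext p → GoodL A S₁ u γ p := by
    intro p hp
    obtain ⟨r, hr, hg⟩ := hp 0
    rw [List.length_eq_zero_iff] at hr
    simpa [hr] using hg
  have hExtNil : Ext [] := by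
    intro k
    obtain ⟨p, hg, hl⟩ := hall k
    exact ⟨p, hl, by simpa using hg⟩
  have hstep : ∀ p, Ext p → ∃ p', (∃ e, p' = p ++ [e]) ∧ Ext p' := by
    intro p hp
    choose r hrlen hrg using hp
    have hne : ∀ k, r (k + 1) ≠ [] := by
      intro k h
      have := hrlen (k + 1)
      rw [h] at this
      simp at this
    obtain ⟨e, he⟩ := Finite.exists_infinite_fiber (fun k => (r (k + 1)).head (hne k))
    have hinf : ((fun k => (r (k + 1)).head (hne k)) ⁻¹' {e} : Set ℕ).Infinite :=
      Set.infinite_coe_iff.mp he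
    refine ⟨p ++ [e], ⟨e, rfl⟩, ?_⟩
    intro k
    obtain ⟨k', hk'mem, hkk'⟩ := hinf.exists_gt k
    have hk'e : (r (k' + 1)).head (hne k') = e := hk'mem
    have hcons : r (k' + 1) = e :: (r (k' + 1)).tail := by
      rw [← hk'e]; exact (List.cons_head_tail _).symm
    refine ⟨(r (k' + 1)).tail.take k, ?_, ?_⟩
    · have : (r (k' + 1)).tail.length = k' := by
        have := hrlen (k' + 1); simp [List.length_tail, this]
      simp [List.length_take, this]; omega
    · have heq : (p ++ [e]) ++ (r (k' + 1)).tail.take k =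
          (p ++ r (k' + 1)).take ((p ++ [e]).length + k) := by
        conv_rhs => rw [hcons]
        have : p ++ e :: (r (k' + 1)).tail = (p ++ [e]) ++ (r (k' + 1)).tail := by simp
        rw [this, List.take_length_add_append]
      rw [heq]
      exact goodL_take A S₁ (hrg (k' + 1)) _
  obtain ⟨f, hf0, hfP, hfR⟩ := exists_chain Ext (fun a b => ∃ e, b = a ++ [e]) [] hExtNil hstep
  choose e' he' using hfR
  have hpfx : ∀ k, A.prefixList e' k = f k := by
    intro k
    induction k with
    | zero => simpa using hf0.symm
    | succ k ih => rw [Arena.prefixList_succ, ih, ← he']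
  have hG : ∀ k, GoodL A S₁ u γ (f k) := fun k => hgood_of_ext _ (hfP k)
  have hlen : ∀ k, (f k).length = k := by
    intro k; rw [← hpfx]; simp
  have hget : ∀ k i (h : i < k), (f k)[i]'(by rw [hlen]; exact h) = e' i := by
    intro k i h
    rw [List.getElem_of_eq (hpfx k).symm]
    simp [Arena.prefixList]
  refine ⟨e', ⟨?_, ?_⟩, ?_, ?_⟩
  · have h1 := (hG 1).1
    have : f 1 = [e' 0] := by
      rw [← hpfx]; rfl
    rw [this] at h1
    exact h1.1
  · intro i
    have hc := Arena.pathFrom_chain (hG (i + 2)).1 i (by rw [hlen]; omega)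
    rwa [hget (i + 2) i (by omega), hget (i + 2) (i + 1) (by omega)] at hc
  · intro k
    rw [hpfx]
    exact (hG k).2.1
  · funext i
    have := (hG (i + 1)).2.2 i (by rw [hlen]; omega)
    rw [hget (i + 1) i (by omega)] at this
    exact this.symm

end Koenig

/-- For every `n, q ≥ 1`, every arena with `n` nodes, every total preorder `≼`
on its nodes, and every `q`-state strategy `S₁` of Player 0, there exists a
chromatic `(qn+1)^n`-state strategy `S₂` such that for every node `v`,
`col(S₂, v) ⊆ ⋃_{u : v ≼ u} col(S₁, u)`. -/
theorem chromatic_upper_bound_preorder {C : Type} (n q : ℕ) (hn : 1 ≤ n) (hq : 1 ≤ q)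
    (A : Arena C) (hcard : Fintype.card A.V = n)
    (pre : A.V → A.V → Prop)
    (hrefl : ∀ v, pre v v)
    (htrans : ∀ u v w, pre u v → pre v w → pre u w)
    (htotal : ∀ u v, pre u v ∨ pre v u)
    (S₁ : A.Strategy) (hS₁ : A.IsStrategy S₁) (hq₁ : A.IsQState S₁ q) :
    ∃ S₂ : A.Strategy, A.IsStrategy S₂ ∧ A.IsChromaticQState S₂ ((q * n + 1) ^ n) ∧
      ∀ v : A.V, A.colSet S₂ v ⊆ ⋃ u ∈ {u : A.V | pre v u}, A.colSet S₁ u := by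
  classical
  obtain ⟨M, instM, m0, δ, hMcard, hmem⟩ := hq₁
  refine ⟨Strat2 A S₁ m0 δ pre, strat2_isStrategy A S₁ m0 δ pre hS₁, ?_, ?_⟩
  · refine ⟨A.V → Option (A.V × M), inferInstance, f0 A m0, delta2 A S₁ m0 δ pre, ?_,
      ⟨sigma2 A S₁ m0 δ pre, fun m e => rfl⟩, strat2_hasMemory A S₁ m0 δ pre⟩
    rw [Fintype.card_fun, Fintype.card_option, Fintype.card_prod, hcard, hMcard, mul_comm]
  · intro v γ hγ
    obtain ⟨P, hP, hcons, rfl⟩ := hγ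
    have hinv := invariant A S₁ m0 δ pre hS₁ hmem hrefl htrans htotal v P hP hcons
    have hk : ∀ k, ∃ u, pre v u ∧
        ∃ p, GoodL A S₁ u (fun i => A.col (P i)) p ∧ p.length = k := by
      intro k
      obtain ⟨u, m, hcomp, hpv⟩ := (hinv k).2
      obtain ⟨p, hp1, hp2, hp3, hp4⟩ := (hinv k).1 _ u m hcomp
      have hplen : p.length = k := by
        have := congrArg List.length hp4
        simpa using this
      refine ⟨u, hpv, p, ⟨?_, hp2, ?_⟩, hplen⟩
      · rw [Arena.pathFrom_ptarget hp1]; exact hp1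
      · intro i hi
        have hik : i < k := hplen ▸ hi
        have h1 : (p.map A.col)[i]'(by simpa using hi) =
            ((A.prefixList P k).map A.col)[i]'(by simpa using hik) :=
          List.getElem_of_eq hp4 _
        rw [List.getElem_map, List.getElem_map] at h1
        rw [h1]
        congr 1
        simp [Arena.prefixList]
    choose uf hufpre hufp using hk
    obtain ⟨u, hu'⟩ := Finite.exists_infinite_fiber uf
    have hu : (uf ⁻¹' {u} : Set ℕ).Infinite := Set.infinite_coe_iff.mp hu'
    have hpreu : pre v u := by
      obtain ⟨k, hk⟩ := hu.nonempty
      have : uf k = u := hk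
      rw [← this]; exact hufpre k
    have hall : ∀ k, ∃ p, GoodL A S₁ u (fun i => A.col (P i)) p ∧ p.length = k := by
      intro k
      obtain ⟨k', hk'm, hkk'⟩ := hu.exists_gt k
      have hk'u : uf k' = u := hk'm
      obtain ⟨p, hg, hl⟩ := hufp k'
      rw [hk'u] at hg
      exact ⟨p.take k, goodL_take A S₁ hg k, by simp [hl]; omega⟩
    exact Set.mem_biUnion (show u ∈ {u : A.V | pre v u} from hpreu)
      (exists_infinite_play A S₁ hall)
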